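/- Let n = 2k with k ≥ 1. Let c be an invertible symmetric n×n real matrix, a an arbitrary n×n real matrix, x a symmetric n×n real matrix, and g ∈ GL(n,ℝ) with det g > 0. Put (c', a') = Ad*(x,g)(c,a) = ((gᵀ)⁻¹ c g⁻¹, g a g⁻¹ + x (gᵀ)⁻¹ c g⁻¹). Then det(c')³ · det( ½ ( a' c'⁻¹ − (a' c'⁻¹)ᵀ ) ) = det(g)^{−4} · det(c)³ · det( ½ ( a c⁻¹ − (a c⁻¹)ᵀ ) ), i.e. h_k(c,a) = det(c)² π(a c⁻¹)² det(c) is a semiinvariant of weight det(g)^{−4} for the coadjoint action. -/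

import Mathlib

open Matrix

theorem h_k_semiinvariant (k : ℕ) (hk : 1 ≤ k)
    (c a x g : Matrix (Fin (2 * k)) (Fin (2 * k)) ℝ)
    (hc : c.IsSymm) (hcu : IsUnit c.det) (hx : x.IsSymm) (hg : 0 < g.det) :
    ((gᵀ)⁻¹ * c * g⁻¹).det ^ 3 *
      ((1 / 2 : ℝ) •
        ((g * a * g⁻¹ + x * ((gᵀ)⁻¹ * c * g⁻¹)) * ((gᵀ)⁻¹ * c * g⁻¹)⁻¹ -
          ((g * a * g⁻¹ + x * ((gᵀ)⁻¹ * c * g⁻¹)) * ((gᵀ)⁻¹ * c * g⁻¹)⁻¹)ᵀ)).det =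
    (g.det ^ 4)⁻¹ * (c.det ^ 3 * ((1 / 2 : ℝ) • (a * c⁻¹ - (a * c⁻¹)ᵀ)).det) := by
  have hgd : g.det ≠ 0 := ne_of_gt hg
  have hgu : IsUnit g.det := isUnit_iff_ne_zero.mpr hgd
  have hgtu : IsUnit gᵀ.det := by rwa [det_transpose]
  -- inverse of c'
  have hinv : ((gᵀ)⁻¹ * c * g⁻¹)⁻¹ = g * c⁻¹ * gᵀ := by
    rw [Matrix.mul_inv_rev, Matrix.mul_inv_rev,
      Matrix.nonsing_inv_nonsing_inv _ hgu, Matrix.nonsing_inv_nonsing_inv _ hgtu]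
    rw [Matrix.mul_assoc]
  have hcu' : IsUnit ((gᵀ)⁻¹ * c * g⁻¹).det := by
    rw [det_mul, det_mul, det_nonsing_inv, det_nonsing_inv, det_transpose]
    simp only [isUnit_iff_ne_zero, Ring.inverse_eq_inv] at *
    simp [hgd, hcu]
  -- simplify a' c'⁻¹
  have key : (g * a * g⁻¹ + x * ((gᵀ)⁻¹ * c * g⁻¹)) * ((gᵀ)⁻¹ * c * g⁻¹)⁻¹
      = g * (a * c⁻¹) * gᵀ + x := by
    rw [add_mul, Matrix.mul_nonsing_inv_cancel_right _ _ hcu', hinv]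
    have : g * a * g⁻¹ * (g * c⁻¹ * gᵀ) = g * a * (g⁻¹ * g) * (c⁻¹ * gᵀ) := by
      noncomm_ring
    rw [this, Matrix.nonsing_inv_mul _ hgu, Matrix.mul_one]
    noncomm_ring
  rw [key]
  have hskew : (g * (a * c⁻¹) * gᵀ + x) - (g * (a * c⁻¹) * gᵀ + x)ᵀ
      = g * (a * c⁻¹ - (a * c⁻¹)ᵀ) * gᵀ := by
    rw [transpose_add, transpose_mul, transpose_mul, transpose_transpose, hx.eq]
    noncomm_ring
  rw [hskew]
  have hsmul : (1 / 2 : ℝ) • (g * (a * c⁻¹ - (a * c⁻¹)ᵀ) * gᵀ)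
      = g * ((1 / 2 : ℝ) • (a * c⁻¹ - (a * c⁻¹)ᵀ)) * gᵀ := by
    rw [Matrix.mul_smul, Matrix.smul_mul]
  rw [hsmul, det_mul, det_mul, det_mul, det_mul, det_nonsing_inv, det_nonsing_inv,
    det_transpose]
  simp only [Ring.inverse_eq_inv]
  field_simp
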